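/- Let t ≥ 0 and suppose 30t+17, 30t+19, 30t+23, 30t+29, 30t+31 are all prime. Let b = 30t+17 and a = 30t+19, and let H_a, H_b be the corresponding H-sequences. Then H_a(5) = 30t+29 and H_b(5) = 30t+23, so H_a(5) − H_b(5) = 6. -/

import Mathlib

/-- The H-sequence with starting value `c`: `Hseq c 2 = c` and for `n ≥ 2`,
`Hseq c (n+1)` is the least `m > Hseq c n` with (`m` prime ↔ `n+1` prime). -/
noncomputable def Hseq (c : ℕ) : ℕ → ℕ
  | 0 => c
  | 1 => c
  | 2 => c
  | n + 3 => sInf {m | Hseq c (n + 2) < m ∧ (Nat.Prime m ↔ Nat.Prime (n + 3))}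

lemma sInf_step (k T : ℕ) (P : Prop) (hT : k < T) (hmem : Nat.Prime T ↔ P)
    (hbet : ∀ m, k < m → m < T → ¬(Nat.Prime m ↔ P)) :
    sInf {m | k < m ∧ (Nat.Prime m ↔ P)} = T := by
  have hTm : T ∈ {m | k < m ∧ (Nat.Prime m ↔ P)} := ⟨hT, hmem⟩
  have h1 : sInf {m | k < m ∧ (Nat.Prime m ↔ P)} ≤ T := Nat.sInf_le hTm
  have hm := Nat.sInf_mem ⟨T, hTm⟩
  rcases lt_or_eq_of_le h1 with h | h
  · exact absurd hm.2 (hbet _ hm.1 h)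
  · exact h

theorem stmt0 (t : ℕ) (h17 : Nat.Prime (30*t+17)) (h19 : Nat.Prime (30*t+19))
    (h23 : Nat.Prime (30*t+23)) (h29 : Nat.Prime (30*t+29)) (h31 : Nat.Prime (30*t+31)) :
    Hseq (30*t+19) 5 = 30*t+29 ∧ Hseq (30*t+17) 5 = 30*t+23 ∧
      Hseq (30*t+19) 5 - Hseq (30*t+17) 5 = 6 := by
  have np3 : Nat.Prime 3 := by norm_num
  have np5 : Nat.Prime 5 := by norm_num
  have np4 : ¬ Nat.Prime 4 := by norm_num
  have c18 : ¬ Nat.Prime (30*t+18) := Nat.not_prime_of_mul_eq (a := 2) (b := 15*t+9) (by ring) (by omega) (by omega)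
  have c20 : ¬ Nat.Prime (30*t+20) := Nat.not_prime_of_mul_eq (a := 2) (b := 15*t+10) (by ring) (by omega) (by omega)
  have c21 : ¬ Nat.Prime (30*t+21) := Nat.not_prime_of_mul_eq (a := 3) (b := 10*t+7) (by ring) (by omega) (by omega)
  have c22 : ¬ Nat.Prime (30*t+22) := Nat.not_prime_of_mul_eq (a := 2) (b := 15*t+11) (by ring) (by omega) (by omega)
  have c24 : ¬ Nat.Prime (30*t+24) := Nat.not_prime_of_mul_eq (a := 2) (b := 15*t+12) (by ring) (by omega) (by omega)
  have c25 : ¬ Nat.Prime (30*t+25) := Nat.not_prime_of_mul_eq (a := 5) (b := 6*t+5) (by ring) (by omega) (by omega)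
  have c26 : ¬ Nat.Prime (30*t+26) := Nat.not_prime_of_mul_eq (a := 2) (b := 15*t+13) (by ring) (by omega) (by omega)
  have c27 : ¬ Nat.Prime (30*t+27) := Nat.not_prime_of_mul_eq (a := 3) (b := 10*t+9) (by ring) (by omega) (by omega)
  have c28 : ¬ Nat.Prime (30*t+28) := Nat.not_prime_of_mul_eq (a := 2) (b := 15*t+14) (by ring) (by omega) (by omega)
  -- sequence for a = 30t+19
  have ha3 : Hseq (30*t+19) 3 = 30*t+23 := by
    show sInf _ = _
    have : Hseq (30*t+19) 2 = 30*t+19 := rfl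
    rw [this]
    apply sInf_step _ _ _ (by omega) (iff_of_true h23 np3)
    intro m h1 h2
    have : m = 30*t+20 ∨ m = 30*t+21 ∨ m = 30*t+22 := by omega
    rcases this with h|h|h <;> subst h <;> simp [c20, c21, c22, np3]
  have ha4 : Hseq (30*t+19) 4 = 30*t+24 := by
    show sInf _ = _
    rw [show (1:ℕ)+2 = 3 from rfl, ha3]
    apply sInf_step _ _ _ (by omega) (iff_of_false c24 np4)
    intro m h1 h2; omega
  have ha5 : Hseq (30*t+19) 5 = 30*t+29 := by
    show sInf _ = _
    rw [show (2:ℕ)+2 = 4 from rfl, ha4]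
    apply sInf_step _ _ _ (by omega) (iff_of_true h29 np5)
    intro m h1 h2
    have : m = 30*t+25 ∨ m = 30*t+26 ∨ m = 30*t+27 ∨ m = 30*t+28 := by omega
    rcases this with h|h|h|h <;> subst h <;> simp [c25, c26, c27, c28, np5]
  -- sequence for b = 30t+17
  have hb3 : Hseq (30*t+17) 3 = 30*t+19 := by
    show sInf _ = _
    have : Hseq (30*t+17) 2 = 30*t+17 := rfl
    rw [this]
    apply sInf_step _ _ _ (by omega) (iff_of_true h19 np3)
    intro m h1 h2
    have : m = 30*t+18 := by omega
    subst this; simp [c18, np3]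
  have hb4 : Hseq (30*t+17) 4 = 30*t+20 := by
    show sInf _ = _
    rw [show (1:ℕ)+2 = 3 from rfl, hb3]
    apply sInf_step _ _ _ (by omega) (iff_of_false c20 np4)
    intro m h1 h2; omega
  have hb5 : Hseq (30*t+17) 5 = 30*t+23 := by
    show sInf _ = _
    rw [show (2:ℕ)+2 = 4 from rfl, hb4]
    apply sInf_step _ _ _ (by omega) (iff_of_true h23 np5)
    intro m h1 h2
    have : m = 30*t+21 ∨ m = 30*t+22 := by omega
    rcases this with h|h <;> subst h <;> simp [c21, c22, np5]
  refine ⟨ha5, hb5, ?_⟩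
  rw [ha5, hb5]; omega
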